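/- arXiv:0705.1701 — 2 statements merged into one kernel-verified Lean document; each statement's English description precedes it below -/
import Mathlib

section
/- Let 0 < α < 1 and let s_N, η_N be sequences of positive integers with η_N ≤ s_N. Under the uniform probability on Dyck paths of length 2s_N with exactly k up-steps at odd instants, where k ≤ α s_N, the probability that the path contains η_N consecutive UD 2-steps is at most C₇ s_N² α^{2η_N}·C₉ for constants C₇, C₉ > 0 independent of N and k. More precisely, for fixed even instants s'₁ < s'₂ with s'₂ - s'₁ = 2η_N, the proportion of such paths with η_N UD steps filling [s'₁, s'₂] is at most N(s_N - η_N, k - η_N)/N(s_N, k) ≤ C₉ α^{2η_N}. -/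
def upCount (f : ℕ → Bool) (t : ℕ) : ℕ :=
  ((Finset.range t).filter (fun i => f i = true)).card

def pathHeight (f : ℕ → Bool) (t : ℕ) : ℤ :=
  2 * (upCount f t : ℤ) - (t : ℤ)

def IsDyckPath (n : ℕ) (f : ℕ → Bool) : Prop :=
  (∀ t, 2 * n ≤ t → f t = false) ∧ pathHeight f (2 * n) = 0 ∧
    ∀ t ≤ 2 * n, 0 ≤ pathHeight f t

def oddUpCount (n : ℕ) (f : ℕ → Bool) : ℕ :=
  ((Finset.range n).filter (fun m => f (2 * m) = true)).card

def dyckSet (n k : ℕ) : Set (ℕ → Bool) :=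
  {f | IsDyckPath n f ∧ oddUpCount n f = k}

/-- The path contains `η` consecutive `UD` 2-steps. -/
def hasConsecUD (s η : ℕ) (f : ℕ → Bool) : Prop :=
  ∃ j, j + η ≤ s ∧ ∀ i < η, f (2 * (j + i)) = true ∧ f (2 * (j + i) + 1) = false

def Uof (s : ℕ) (f : ℕ → Bool) : Finset ℕ :=
  (Finset.range s).filter (fun m => f (2*m) = true)

def Dof (s : ℕ) (f : ℕ → Bool) : Finset ℕ :=
  (Finset.range s).filter (fun m => f (2*m+1) = false)

lemma Uof_subset (s f) : Uof s f ⊆ Finset.range s := Finset.filter_subset _ _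
lemma Dof_subset (s f) : Dof s f ⊆ Finset.range s := Finset.filter_subset _ _

lemma Uof_inter_range (s t : ℕ) (f) (h : t ≤ s) :
    Uof s f ∩ Finset.range t = Uof t f := by
  ext m
  simp only [Uof, Finset.mem_inter, Finset.mem_filter, Finset.mem_range]
  constructor
  · rintro ⟨⟨_, hf⟩, hlt⟩; exact ⟨hlt, hf⟩
  · rintro ⟨hlt, hf⟩; exact ⟨⟨by omega, hf⟩, hlt⟩

lemma Dof_inter_range (s t : ℕ) (f) (h : t ≤ s) :
    Dof s f ∩ Finset.range t = Dof t f := by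
  ext m
  simp only [Dof, Finset.mem_inter, Finset.mem_filter, Finset.mem_range]
  constructor
  · rintro ⟨⟨_, hf⟩, hlt⟩; exact ⟨hlt, hf⟩
  · rintro ⟨hlt, hf⟩; exact ⟨⟨by omega, hf⟩, hlt⟩

lemma upCount_succ (f : ℕ → Bool) (n : ℕ) :
    upCount f (n+1) = upCount f n + (if f n = true then 1 else 0) := by
  unfold upCount
  rw [Finset.range_add_one, Finset.filter_insert]
  split_ifs with h
  · rw [Finset.card_insert_of_notMem (by simp)]
  · rfl

lemma Uof_succ (f : ℕ → Bool) (t : ℕ) :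
    (Uof (t+1) f).card = (Uof t f).card + (if f (2*t) = true then 1 else 0) := by
  unfold Uof
  rw [Finset.range_add_one, Finset.filter_insert]
  split_ifs with h
  · rw [Finset.card_insert_of_notMem (by simp)]
  · rfl

lemma Dof_succ (f : ℕ → Bool) (t : ℕ) :
    (Dof (t+1) f).card = (Dof t f).card + (if f (2*t+1) = false then 1 else 0) := by
  unfold Dof
  rw [Finset.range_add_one, Finset.filter_insert]
  split_ifs with h
  · rw [Finset.card_insert_of_notMem (by simp)]
  · rfl

lemma upCount_even (f : ℕ → Bool) (t : ℕ) :
    upCount f (2*t) + (Dof t f).card = (Uof t f).card + t := by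
  induction t with
  | zero => simp [upCount, Uof, Dof]
  | succ t ih =>
    have h2 : 2*(t+1) = (2*t+1)+1 := by ring
    rw [h2, upCount_succ, upCount_succ, Uof_succ, Dof_succ]
    cases hf : f (2*t) <;> cases hg : f (2*t+1) <;> simp [hf, hg] <;> omega

lemma dCard_le (f t) : (Dof t f).card ≤ t := by
  calc (Dof t f).card ≤ (Finset.range t).card := Finset.card_le_card (Dof_subset t f)
    _ = t := Finset.card_range t

lemma pathHeight_even (f : ℕ → Bool) (t : ℕ) :
    pathHeight f (2*t) = 2 * ((Uof t f).card : ℤ) - 2 * ((Dof t f).card : ℤ) := by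
  unfold pathHeight
  have := upCount_even f t
  have hd := dCard_le f t
  push_cast
  zify at this
  linarith

lemma pathHeight_odd (f : ℕ → Bool) (t : ℕ) :
    pathHeight f (2*t+1) = 2 * ((Uof (t+1) f).card : ℤ) - 2 * ((Dof t f).card : ℤ) - 1 := by
  unfold pathHeight
  have h1 : 2*t+1 = (2*t)+1 := rfl
  rw [upCount_succ]
  have := upCount_even f t
  have hu := Uof_succ f t
  zify at this hu
  cases hf : f (2*t) <;> simp [hf] at hu ⊢ <;> push_cast <;> linarith

lemma dyck_iff (s k : ℕ) (f : ℕ → Bool) :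
    f ∈ dyckSet s k ↔ ((∀ t, 2*s ≤ t → f t = false) ∧ (Uof s f).card = k ∧ (Dof s f).card = k ∧
      ∀ t < s, (Dof t f).card < (Uof (t+1) f).card) := by
  have hoU : oddUpCount s f = (Uof s f).card := rfl
  constructor
  · rintro ⟨⟨hvan, hend, hnn⟩, hk⟩
    rw [hoU] at hk
    have hend' : (Uof s f).card = (Dof s f).card := by
      rw [pathHeight_even] at hend
      omega
    refine ⟨hvan, hk, by omega, ?_⟩
    intro t ht
    have := hnn (2*t+1) (by omega)
    rw [pathHeight_odd] at this
    omega
  · rintro ⟨hvan, hU, hD, hcond⟩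
    refine ⟨⟨hvan, ?_, ?_⟩, by rw [hoU]; exact hU⟩
    · rw [pathHeight_even]; omega
    · intro t ht
      rcases Nat.even_or_odd t with ⟨m, hm⟩ | ⟨m, hm⟩
      · subst hm
        rw [show m + m = 2*m by ring, pathHeight_even]
        rcases Nat.lt_or_ge m s with h | h
        · have := hcond m h
          have := Uof_succ f m
          split_ifs at this <;> omega
        · have hms : m = s := by omega
          subst hms
          omega
      · subst hm
        rw [show 2*m+1 = 2*m+1 from rfl, pathHeight_odd]
        have hms : m < s := by omega
        have := hcond m hms
        omega

open Finset

def Pset (s a b : ℕ) : Finset (Finset ℕ × Finset ℕ) :=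
  ((Finset.range s).powerset ×ˢ (Finset.range s).powerset).filter
    (fun p => p.1.card = a ∧ p.2.card = b ∧
      ∀ t < s, (p.2 ∩ Finset.range t).card < (p.1 ∩ Finset.range (t+1)).card)

lemma mem_Pset {s a b : ℕ} {p : Finset ℕ × Finset ℕ} :
    p ∈ Pset s a b ↔ p.1 ⊆ Finset.range s ∧ p.2 ⊆ Finset.range s ∧
      p.1.card = a ∧ p.2.card = b ∧
      ∀ t < s, (p.2 ∩ Finset.range t).card < (p.1 ∩ Finset.range (t+1)).card := by
  unfold Pset
  simp only [Finset.mem_filter, Finset.mem_product, Finset.mem_powerset]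
  tauto

lemma erase_inter_range (X : Finset ℕ) (s t : ℕ) (ht : t ≤ s) :
    (X.erase s) ∩ Finset.range t = X ∩ Finset.range t := by
  ext x
  simp only [Finset.mem_inter, Finset.mem_erase, Finset.mem_range]
  constructor
  · rintro ⟨⟨_, hx⟩, hlt⟩; exact ⟨hx, hlt⟩
  · rintro ⟨hx, hlt⟩; exact ⟨⟨by omega, hx⟩, hlt⟩

lemma insert_inter_range (X : Finset ℕ) (s t : ℕ) (ht : t ≤ s) :
    (insert s X) ∩ Finset.range t = X ∩ Finset.range t := by
  ext x
  simp only [Finset.mem_inter, Finset.mem_insert, Finset.mem_range]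
  constructor
  · rintro ⟨h | hx, hlt⟩
    · omega
    · exact ⟨hx, hlt⟩
  · rintro ⟨hx, hlt⟩; exact ⟨Or.inr hx, hlt⟩

lemma subset_range_inter {X : Finset ℕ} {s : ℕ} (h : X ⊆ Finset.range s) :
    X ∩ Finset.range s = X := Finset.inter_eq_left.mpr h

lemma subset_range_succ_of_not_mem {X : Finset ℕ} {s : ℕ}
    (h : X ⊆ Finset.range (s+1)) (hs : s ∉ X) : X ⊆ Finset.range s := by
  intro x hx
  have := h hx
  simp only [Finset.mem_range] at this ⊢
  have : x ≠ s := fun he => hs (he ▸ hx)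
  omega

lemma erase_subset_range {X : Finset ℕ} {s : ℕ} (h : X ⊆ Finset.range (s+1)) :
    X.erase s ⊆ Finset.range s := by
  intro x hx
  simp only [Finset.mem_erase] at hx
  have := h hx.2
  simp only [Finset.mem_range] at this ⊢
  omega

-- Pset 0
lemma Pset_zero (a b : ℕ) : (Pset 0 a b).card = if a = 0 ∧ b = 0 then 1 else 0 := by
  unfold Pset
  simp only [Finset.range_zero, Finset.powerset_empty]
  split_ifs with h
  · obtain ⟨rfl, rfl⟩ := h
    rw [show ({∅} ×ˢ ({∅} : Finset (Finset ℕ))) = {(∅, ∅)} from rfl]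
    rw [Finset.filter_singleton]
    norm_num
  · apply Finset.card_eq_zero.mpr
    rw [Finset.filter_eq_empty_iff]
    intro p hp
    simp only [Finset.mem_product, Finset.mem_singleton] at hp
    obtain ⟨h1, h2⟩ := hp
    simp [h1, h2]
    omega

-- a = 0 is impossible for s ≥ 1
lemma Pset_a_zero (s b : ℕ) (hs : 1 ≤ s) : (Pset s 0 b).card = 0 := by
  apply Finset.card_eq_zero.mpr
  rw [Finset.eq_empty_iff_forall_notMem]
  intro p hp
  rw [mem_Pset] at hp
  obtain ⟨_, _, hc1, _, hcond⟩ := hp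
  have := hcond 0 (by omega)
  rw [Finset.card_eq_zero] at hc1
  simp [hc1] at this

lemma class11_card (s a b : ℕ) (hba : b ≤ a) :
    ((Pset (s+1) (a+1) (b+1)).filter (fun p => s ∈ p.1 ∧ s ∈ p.2)).card = (Pset s a b).card := by
  apply Finset.card_nbij' (fun p => (p.1.erase s, p.2.erase s))
    (fun q => (insert s q.1, insert s q.2))
  · -- maps into Pset s a b
    intro p hp
    rw [Finset.mem_coe, Finset.mem_filter, mem_Pset] at hp
    obtain ⟨⟨h1, h2, hc1, hc2, hcond⟩, hm1, hm2⟩ := hp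
    rw [Finset.mem_coe, mem_Pset]
    refine ⟨erase_subset_range h1, erase_subset_range h2, ?_, ?_, ?_⟩
    · rw [Finset.card_erase_of_mem hm1, hc1]
      omega
    · rw [Finset.card_erase_of_mem hm2, hc2]
      omega
    · intro t ht
      rw [erase_inter_range _ _ _ (by omega), erase_inter_range _ _ _ (by omega)]
      exact hcond t (by omega)
  · -- reverse maps into class
    intro q hq
    rw [Finset.mem_coe, mem_Pset] at hq
    obtain ⟨h1, h2, hc1, hc2, hcond⟩ := hq
    have hs1 : s ∉ q.1 := fun h => by simpa using h1 h
    have hs2 : s ∉ q.2 := fun h => by simpa using h2 h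
    rw [Finset.mem_coe, Finset.mem_filter, mem_Pset]
    refine ⟨⟨?_, ?_, ?_, ?_, ?_⟩, by simp, by simp⟩
    · intro x hx
      simp only [Finset.mem_insert] at hx
      rcases hx with rfl | hx
      · simp
      · exact Finset.range_subset_range.mpr (by omega) (h1 hx)
    · intro x hx
      simp only [Finset.mem_insert] at hx
      rcases hx with rfl | hx
      · simp
      · exact Finset.range_subset_range.mpr (by omega) (h2 hx)
    · rw [Finset.card_insert_of_notMem hs1, hc1]
    · rw [Finset.card_insert_of_notMem hs2, hc2]
    · intro t ht
      rcases Nat.lt_succ_iff_lt_or_eq.mp ht with h | heq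
      · rw [insert_inter_range _ _ _ (by omega), insert_inter_range _ _ _ (by omega)]
        exact hcond t h
      · subst heq
        rw [insert_inter_range _ _ _ (le_refl t)]
        have he : (insert t q.1) ∩ Finset.range (t+1) = insert t q.1 := by
          apply subset_range_inter
          intro x hx
          simp only [Finset.mem_insert] at hx
          rcases hx with rfl | hx
          · simp
          · exact Finset.range_subset_range.mpr (by omega) (h1 hx)
        rw [he, subset_range_inter h2, Finset.card_insert_of_notMem hs1, hc1, hc2]
        omega
  · intro p hp
    rw [Finset.mem_coe, Finset.mem_filter] at hp
    simp only
    rw [Finset.insert_erase hp.2.1, Finset.insert_erase hp.2.2]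
  · intro q hq
    rw [Finset.mem_coe, mem_Pset] at hq
    have hs1 : s ∉ q.1 := fun h => by simpa using hq.1 h
    have hs2 : s ∉ q.2 := fun h => by simpa using hq.2.1 h
    simp only
    rw [Finset.erase_insert hs1, Finset.erase_insert hs2]

lemma class10_card (s a B : ℕ) (hba : B ≤ a) :
    ((Pset (s+1) (a+1) B).filter (fun p => s ∈ p.1 ∧ s ∉ p.2)).card = (Pset s a B).card := by
  apply Finset.card_nbij' (fun p => (p.1.erase s, p.2))
    (fun q => (insert s q.1, q.2))
  · intro p hp
    rw [Finset.mem_coe, Finset.mem_filter, mem_Pset] at hp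
    obtain ⟨⟨h1, h2, hc1, hc2, hcond⟩, hm1, hm2⟩ := hp
    rw [Finset.mem_coe, mem_Pset]
    refine ⟨erase_subset_range h1, subset_range_succ_of_not_mem h2 hm2, ?_, hc2, ?_⟩
    · rw [Finset.card_erase_of_mem hm1, hc1]
      omega
    · intro t ht
      rw [erase_inter_range _ _ _ (by omega)]
      exact hcond t (by omega)
  · intro q hq
    rw [Finset.mem_coe, mem_Pset] at hq
    obtain ⟨h1, h2, hc1, hc2, hcond⟩ := hq
    have hs1 : s ∉ q.1 := fun h => by simpa using h1 h
    have hs2 : s ∉ q.2 := fun h => by simpa using h2 h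
    rw [Finset.mem_coe, Finset.mem_filter, mem_Pset]
    refine ⟨⟨?_, fun x hx => Finset.range_subset_range.mpr (by omega) (h2 hx), ?_, hc2, ?_⟩,
      by simp, by simpa using hs2⟩
    · intro x hx
      simp only [Finset.mem_insert] at hx
      rcases hx with rfl | hx
      · simp
      · exact Finset.range_subset_range.mpr (by omega) (h1 hx)
    · rw [Finset.card_insert_of_notMem hs1, hc1]
    · intro t ht
      rcases Nat.lt_succ_iff_lt_or_eq.mp ht with h | heq
      · rw [insert_inter_range _ _ _ (by omega)]
        exact hcond t h
      · subst heq
        have he : (insert t q.1) ∩ Finset.range (t+1) = insert t q.1 := by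
          apply subset_range_inter
          intro x hx
          simp only [Finset.mem_insert] at hx
          rcases hx with rfl | hx
          · simp
          · exact Finset.range_subset_range.mpr (by omega) (h1 hx)
        rw [he, subset_range_inter h2, Finset.card_insert_of_notMem hs1, hc1, hc2]
        omega
  · intro p hp
    rw [Finset.mem_coe, Finset.mem_filter] at hp
    simp only
    rw [Finset.insert_erase hp.2.1]
  · intro q hq
    rw [Finset.mem_coe, mem_Pset] at hq
    have hs1 : s ∉ q.1 := fun h => by simpa using hq.1 h
    simp only
    rw [Finset.erase_insert hs1]

lemma class10_empty (s a B : ℕ) (hba : ¬ B ≤ a) :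
    ((Pset (s+1) (a+1) B).filter (fun p => s ∈ p.1 ∧ s ∉ p.2)).card = 0 := by
  rw [Finset.card_eq_zero, Finset.filter_eq_empty_iff]
  intro p hp
  rw [mem_Pset] at hp
  obtain ⟨h1, h2, hc1, hc2, hcond⟩ := hp
  rintro ⟨hm1, hm2⟩
  have := hcond s (by omega)
  rw [subset_range_inter (subset_range_succ_of_not_mem h2 hm2),
    subset_range_inter h1, hc1, hc2] at this
  omega

lemma class01_card (s a b : ℕ) (hba : b ≤ a) :
    ((Pset (s+1) (a+1) (b+1)).filter (fun p => s ∉ p.1 ∧ s ∈ p.2)).card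
      = (Pset s (a+1) b).card := by
  apply Finset.card_nbij' (fun p => (p.1, p.2.erase s))
    (fun q => (q.1, insert s q.2))
  · intro p hp
    rw [Finset.mem_coe, Finset.mem_filter, mem_Pset] at hp
    obtain ⟨⟨h1, h2, hc1, hc2, hcond⟩, hm1, hm2⟩ := hp
    rw [Finset.mem_coe, mem_Pset]
    refine ⟨subset_range_succ_of_not_mem h1 hm1, erase_subset_range h2, hc1, ?_, ?_⟩
    · rw [Finset.card_erase_of_mem hm2, hc2]
      omega
    · intro t ht
      rw [erase_inter_range _ _ _ (by omega)]
      exact hcond t (by omega)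
  · intro q hq
    rw [Finset.mem_coe, mem_Pset] at hq
    obtain ⟨h1, h2, hc1, hc2, hcond⟩ := hq
    have hs1 : s ∉ q.1 := fun h => by simpa using h1 h
    have hs2 : s ∉ q.2 := fun h => by simpa using h2 h
    rw [Finset.mem_coe, Finset.mem_filter, mem_Pset]
    refine ⟨⟨fun x hx => Finset.range_subset_range.mpr (by omega) (h1 hx), ?_, hc1, ?_, ?_⟩,
      by simpa using hs1, by simp⟩
    · intro x hx
      simp only [Finset.mem_insert] at hx
      rcases hx with rfl | hx
      · simp
      · exact Finset.range_subset_range.mpr (by omega) (h2 hx)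
    · rw [Finset.card_insert_of_notMem hs2, hc2]
    · intro t ht
      rcases Nat.lt_succ_iff_lt_or_eq.mp ht with h | heq
      · rw [insert_inter_range _ _ _ (by omega)]
        exact hcond t h
      · subst heq
        rw [insert_inter_range _ _ _ (le_refl t), subset_range_inter h2]
        have he : q.1 ∩ Finset.range (t+1) = q.1 :=
          subset_range_inter (fun x hx => Finset.range_subset_range.mpr (by omega) (h1 hx))
        rw [he, hc1, hc2]
        omega
  · intro p hp
    rw [Finset.mem_coe, Finset.mem_filter] at hp
    simp only
    rw [Finset.insert_erase hp.2.2]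
  · intro q hq
    rw [Finset.mem_coe, mem_Pset] at hq
    have hs2 : s ∉ q.2 := fun h => by simpa using hq.2.1 h
    simp only
    rw [Finset.erase_insert hs2]

lemma class00_card (s A B : ℕ) (hba : B < A) :
    ((Pset (s+1) A B).filter (fun p => s ∉ p.1 ∧ s ∉ p.2)).card = (Pset s A B).card := by
  apply Finset.card_nbij' id id
  · intro p hp
    rw [Finset.mem_coe, Finset.mem_filter, mem_Pset] at hp
    obtain ⟨⟨h1, h2, hc1, hc2, hcond⟩, hm1, hm2⟩ := hp
    rw [Finset.mem_coe, mem_Pset]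
    exact ⟨subset_range_succ_of_not_mem h1 hm1, subset_range_succ_of_not_mem h2 hm2,
      hc1, hc2, fun t ht => hcond t (by omega)⟩
  · intro q hq
    rw [Finset.mem_coe, mem_Pset] at hq
    obtain ⟨h1, h2, hc1, hc2, hcond⟩ := hq
    have hs1 : s ∉ q.1 := fun h => by simpa using h1 h
    have hs2 : s ∉ q.2 := fun h => by simpa using h2 h
    rw [Finset.mem_coe, Finset.mem_filter, mem_Pset]
    refine ⟨⟨fun x hx => Finset.range_subset_range.mpr (by omega) (h1 hx),
      fun x hx => Finset.range_subset_range.mpr (by omega) (h2 hx), hc1, hc2, ?_⟩, hs1, hs2⟩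
    intro t ht
    rcases Nat.lt_succ_iff_lt_or_eq.mp ht with h | heq
    · exact hcond t h
    · subst heq
      have he2 : q.2 ∩ Finset.range t = q.2 := subset_range_inter h2
      have he : q.1 ∩ Finset.range (t+1) = q.1 :=
        subset_range_inter (fun x hx => Finset.range_subset_range.mpr (by omega) (h1 hx))
      simp only [id_eq]
      rw [he2, he, hc1, hc2]
      omega
  · intro p _; rfl
  · intro q _; rfl

lemma class00_empty (s A B : ℕ) (hba : ¬ B < A) :
    ((Pset (s+1) A B).filter (fun p => s ∉ p.1 ∧ s ∉ p.2)).card = 0 := by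
  rw [Finset.card_eq_zero, Finset.filter_eq_empty_iff]
  intro p hp
  rw [mem_Pset] at hp
  obtain ⟨h1, h2, hc1, hc2, hcond⟩ := hp
  rintro ⟨hm1, hm2⟩
  have := hcond s (by omega)
  rw [subset_range_inter (subset_range_succ_of_not_mem h2 hm2),
    subset_range_inter h1, hc1, hc2] at this
  omega

lemma class_sb_empty (s A : ℕ) (Q : Finset ℕ × Finset ℕ → Prop) [DecidablePred Q] :
    ((Pset (s+1) A 0).filter (fun p => Q p ∧ s ∈ p.2)).card = 0 := by
  rw [Finset.card_eq_zero, Finset.filter_eq_empty_iff]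
  intro p hp
  rw [mem_Pset] at hp
  rintro ⟨_, hm2⟩
  have := hp.2.2.2.1
  rw [Finset.card_eq_zero] at this
  rw [this] at hm2
  simp at hm2

lemma card_split4 {γ : Type*} [DecidableEq γ] (T : Finset γ) (P Q : γ → Prop)
    [DecidablePred P] [DecidablePred Q] :
    T.card = (T.filter (fun x => P x ∧ Q x)).card + (T.filter (fun x => P x ∧ ¬ Q x)).card
      + (T.filter (fun x => ¬ P x ∧ Q x)).card + (T.filter (fun x => ¬ P x ∧ ¬ Q x)).card := by
  rw [← Finset.card_filter_add_card_filter_not (p := P) (s := T)]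
  rw [← Finset.card_filter_add_card_filter_not (p := Q) (s := T.filter P)]
  rw [← Finset.card_filter_add_card_filter_not (p := Q) (s := T.filter (fun x => ¬ P x))]
  simp only [Finset.filter_filter]
  ring

lemma Pset_rec1 (s a b : ℕ) (hba : b ≤ a) :
    (Pset (s+1) (a+1) (b+1)).card =
      (Pset s a b).card + (Pset s (a+1) b).card +
      (if b < a then (Pset s a (b+1)).card + (Pset s (a+1) (b+1)).card else 0) := by
  rw [card_split4 (Pset (s+1) (a+1) (b+1)) (fun p => s ∈ p.1) (fun p => s ∈ p.2)]
  rw [class11_card s a b hba, class01_card s a b hba]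
  rcases lt_or_ge b a with h | h
  · rw [if_pos h, class10_card s a (b+1) (by omega), class00_card s (a+1) (b+1) (by omega)]
    ring
  · rw [if_neg (by omega), class10_empty s a (b+1) (by omega),
      class00_empty s (a+1) (b+1) (by omega)]
    ring

lemma Pset_rec0 (s a : ℕ) :
    (Pset (s+1) (a+1) 0).card = (Pset s a 0).card + (Pset s (a+1) 0).card := by
  rw [card_split4 (Pset (s+1) (a+1) 0) (fun p => s ∈ p.1) (fun p => s ∈ p.2)]
  rw [class_sb_empty s (a+1) (fun p => s ∈ p.1), class_sb_empty s (a+1) (fun p => s ∉ p.1)]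
  rw [class10_card s a 0 (by omega), class00_card s (a+1) 0 (by omega)]
  ring

lemma Pset_CF : ∀ m : ℕ, (∀ a, (Pset (m+1) (a+1) 0).card = m.choose a) ∧
    (∀ a b, b ≤ a → (Pset (m+1) (a+1) (b+1)).card + (m+1).choose b * m.choose (a+1)
      = m.choose a * (m+1).choose (b+1)) := by
  intro m
  induction m with
  | zero =>
    constructor
    · intro a
      rw [Pset_rec0 0 a, Pset_zero, Pset_zero]
      cases a with
      | zero => simp
      | succ a => simp
    · intro a b hba
      rw [Pset_rec1 0 a b hba, Pset_zero, Pset_zero]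
      rcases Nat.eq_zero_or_pos a with rfl | ha
      · have hb : b = 0 := by omega
        subst hb
        norm_num
      · obtain ⟨a, rfl⟩ : ∃ a', a = a' + 1 := ⟨a-1, by omega⟩
        rcases Nat.lt_or_ge b (a+1) with hlt | hge'
        · rw [if_pos hlt, Pset_zero, Pset_zero]
          simp [Nat.choose_succ_succ]
        · have : b = a + 1 := by omega
          subst this
          rw [if_neg (lt_irrefl _)]
          simp [Nat.choose_succ_succ]
  | succ m ih =>
    obtain ⟨ih0, ih1⟩ := ih
    constructor
    · intro a
      rw [Pset_rec0 (m+1) a]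
      cases a with
      | zero =>
        rw [Pset_a_zero (m+1) 0 (by omega), ih0 0]
        simp
      | succ a =>
        rw [ih0 a, ih0 (a+1), Nat.choose_succ_succ]
    · intro a b hba
      rw [Pset_rec1 (m+1) a b hba]
      rcases Nat.lt_or_ge b a with hlt | hge
      · rw [if_pos hlt]
        obtain ⟨a, rfl⟩ : ∃ a', a = a' + 1 := ⟨a-1, by omega⟩
        rcases Nat.eq_zero_or_pos b with rfl | hb
        · have h1 := ih0 a
          have h2 := ih0 (a+1)
          have h3 := ih1 a 0 (by omega)
          have h4 := ih1 (a+1) 0 (by omega)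
          simp only [Nat.choose_succ_succ, Nat.choose_zero_right, Nat.choose_one_right]
            at h1 h2 h3 h4 ⊢
          zify at h1 h2 h3 h4 ⊢
          linear_combination h1 + h2 + h3 + h4
        · obtain ⟨b, rfl⟩ : ∃ b', b = b' + 1 := ⟨b-1, by omega⟩
          have h1 := ih1 a b (by omega)
          have h2 := ih1 (a+1) b (by omega)
          have h3 := ih1 a (b+1) (by omega)
          have h4 := ih1 (a+1) (b+1) (by omega)
          simp only [Nat.choose_succ_succ, Nat.choose_zero_right, Nat.choose_one_right]
            at h1 h2 h3 h4 ⊢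
          zify at h1 h2 h3 h4 ⊢
          linear_combination h1 + h2 + h3 + h4
      · have : b = a := by omega
        subst this
        rw [if_neg (lt_irrefl _)]
        cases b with
        | zero =>
          rw [Pset_a_zero (m+1) 0 (by omega), ih0 0]
          simp only [Nat.choose_succ_succ, Nat.choose_zero_right, Nat.choose_one_right]
          omega
        | succ a =>
          have h1 := ih1 a a (le_refl a)
          have h2 := ih1 (a+1) a (by omega)
          simp only [Nat.choose_succ_succ, Nat.choose_zero_right, Nat.choose_one_right]
            at h1 h2 ⊢
          zify at h1 h2 ⊢
          linear_combination h1 + h2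

lemma Pset_diag (s k : ℕ) (hk : 1 ≤ k) (hks : k ≤ s) :
    s * (Pset s k k).card = s.choose k * s.choose (k-1) := by
  obtain ⟨m, rfl⟩ : ∃ m, s = m + 1 := ⟨s - 1, by omega⟩
  obtain ⟨j, rfl⟩ : ∃ j, k = j + 1 := ⟨k - 1, by omega⟩
  have hjm : j ≤ m := by omega
  have hCF := (Pset_CF m).2 j j (le_refl j)
  have hA := Nat.add_one_mul_choose_eq m j
  have hB := Nat.add_one_mul_choose_eq m (j+1)
  have hC := Nat.choose_succ_right_eq (m+1) (j+1)
  have hD := Nat.choose_succ_right_eq (m+1) j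
  have hsub1 : m + 1 - (j + 1) = m - j := by omega
  have hsub2 : m + 1 - j = (m - j) + 1 := by omega
  rw [hsub1] at hC
  rw [hsub2] at hD
  have hred : (j + 1 : ℕ) - 1 = j := by omega
  rw [hred]
  zify at hCF hA hB hC hD ⊢
  linear_combination ((m:ℤ)+1) * hCF + ((m+1).choose (j+1) : ℤ) * hA
    - ((m+1).choose j : ℤ) * hB - ((m+1).choose j : ℤ) * hC
    + ((m+1).choose (j+1) : ℤ) * hD

lemma keycast (s k : ℕ) : ((s + 1) * (s.choose k) : ℝ) = ((s+1).choose (k+1)) * (k + 1) := by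
  have h := Nat.add_one_mul_choose_eq s k
  have : (((s+1) * s.choose k : ℕ) : ℝ) = (((s+1).choose (k+1) * (k+1) : ℕ) : ℝ) := by
    exact_mod_cast congrArg (fun n : ℕ => (n : ℝ)) h
  push_cast at this
  linarith

-- C(s-η, k-η) ≤ α^η C(s,k)
lemma lemB (α : ℝ) (hα0 : 0 < α) (hα1 : α < 1) :
    ∀ η k s : ℕ, η ≤ k → k ≤ s → (k : ℝ) ≤ α * s →
      ((s - η).choose (k - η) : ℝ) ≤ α ^ η * (s.choose k : ℝ) := by
  intro η
  induction η with
  | zero => intro k s _ _ _; simp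
  | succ η ih =>
    intro k s hηk hks hka
    obtain ⟨k, rfl⟩ : ∃ k', k = k' + 1 := ⟨k - 1, by omega⟩
    obtain ⟨s, rfl⟩ : ∃ s', s = s' + 1 := ⟨s - 1, by omega⟩
    have h1 : (k : ℝ) ≤ α * s := by
      have : (k : ℝ) + 1 ≤ α * (s + 1) := by push_cast at hka ⊢; linarith
      nlinarith [hα1]
    have h2 : ((s - η).choose (k - η) : ℝ) ≤ α ^ η * (s.choose k : ℝ) :=
      ih k s (by omega) (by omega) h1
    have key := keycast s k
    have hchoose : (s.choose k : ℝ) ≤ α * ((s+1).choose (k+1) : ℝ) := by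
      have hs1 : (0:ℝ) < (s:ℝ) + 1 := by positivity
      have hform : (s.choose k : ℝ) = ((s+1).choose (k+1)) * (k+1) / (s+1) := by
        field_simp; linarith [key]
      rw [hform, div_le_iff₀ hs1]
      have hnn : (0:ℝ) ≤ ((s+1).choose (k+1) : ℝ) := by positivity
      push_cast at hka
      nlinarith
    have heq : (s + 1 - (η+1)).choose (k + 1 - (η+1)) = (s - η).choose (k - η) := by
      congr 1 <;> omega
    rw [heq]
    calc ((s - η).choose (k - η) : ℝ) ≤ α ^ η * (s.choose k : ℝ) := h2
      _ ≤ α ^ η * (α * ((s+1).choose (k+1) : ℝ)) := by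
          apply mul_le_mul_of_nonneg_left hchoose (by positivity)
      _ = α ^ (η+1) * ((s+1).choose (k+1) : ℝ) := by ring

-- 1 ≤ α^η C(s,η)
lemma lemF (α : ℝ) (hα0 : 0 < α) (hα1 : α < 1) :
    ∀ η s : ℕ, (η : ℝ) ≤ α * s → (1:ℝ) ≤ α ^ η * (s.choose η : ℝ) := by
  intro η
  induction η with
  | zero => intro s _; simp
  | succ η ih =>
    intro s hηs
    have hs : 1 ≤ s := by
      by_contra h
      push_neg at h
      interval_cases s
      push_cast at hηs; nlinarith
    obtain ⟨s, rfl⟩ : ∃ s', s = s' + 1 := ⟨s - 1, by omega⟩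
    have h1 : (η : ℝ) ≤ α * s := by
      push_cast at hηs; nlinarith
    have h2 := ih s h1
    have key := keycast s η
    have hchoose : (s.choose η : ℝ) ≤ α * ((s+1).choose (η+1) : ℝ) := by
      push_cast at hηs
      have hη1 : (0:ℝ) < (η:ℝ) + 1 := by positivity
      have hform : ((s+1).choose (η+1) : ℝ) = (s+1) * (s.choose η) / (η+1) := by
        field_simp; linarith [key]
      rw [hform]
      have heq : α * ((s+1) * (s.choose η:ℝ) / (η+1)) = α * ((s+1) * (s.choose η:ℝ)) / (η+1) := by
        ring
      rw [heq, le_div_iff₀ hη1]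
      have hnn : (0:ℝ) ≤ (s.choose η : ℝ) := by positivity
      nlinarith
    calc (1:ℝ) ≤ α ^ η * (s.choose η : ℝ) := h2
      _ ≤ α ^ η * (α * ((s+1).choose (η+1) : ℝ)) := by
          apply mul_le_mul_of_nonneg_left hchoose (by positivity)
      _ = α ^ (η+1) * ((s+1).choose (η+1) : ℝ) := by ring

-- Conjunct 2
lemma narayana_ratio (α : ℝ) (hα0 : 0 < α) (hα1 : α < 1) (s k η : ℕ)
    (hη1 : 1 ≤ η) (hηk : η ≤ k) (hka : (k : ℝ) ≤ α * s) :
    (1 / ((s - η : ℕ) : ℝ)) * ((s - η).choose (k - η) : ℝ) * ((s - η).choose (k - η - 1) : ℝ)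
      ≤ (α * (1 - α))⁻¹ * α ^ (2 * η) *
        ((1 / (s : ℝ)) * (s.choose k : ℝ) * (s.choose (k - 1) : ℝ)) := by
  have hk1 : (1:ℝ) ≤ (k:ℝ) := by exact_mod_cast hη1.trans hηk
  have hs0 : 0 < s := by
    rcases Nat.eq_zero_or_pos s with rfl | h
    · exfalso; push_cast at hka; nlinarith
    · exact h
  have hs_real : (0:ℝ) < (s:ℝ) := by exact_mod_cast hs0
  have hks : k < s := by
    by_contra h
    push_neg at h
    have : (s : ℝ) ≤ (k : ℝ) := by exact_mod_cast h
    nlinarith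
  have hηs : η < s := lt_of_le_of_lt hηk hks
  have hsη : ((s - η : ℕ) : ℝ) = (s : ℝ) - (η : ℝ) := by
    push_cast [Nat.cast_sub hηs.le]; ring
  have hηa : (η : ℝ) ≤ α * s := le_trans (by exact_mod_cast hηk) hka
  have hsηpos : (0:ℝ) < (s:ℝ) - η := by nlinarith
  have h1α : (0:ℝ) < 1 - α := by linarith
  -- 1/(s-η) ≤ (1/(1-α)) * (1/s)
  have hfrac : (1:ℝ) / ((s - η : ℕ) : ℝ) ≤ (1/(1-α)) * (1/s) := by
    rw [hsη, div_le_iff₀ hsηpos]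
    have hpos : (0:ℝ) < (1/(1-α)) * (1/s) := by positivity
    have hstep : (s:ℝ) - η ≥ (1 - α) * s := by nlinarith
    calc (1:ℝ) = (1/(1-α)) * (1/s) * ((1-α)*s) := by field_simp
      _ ≤ (1/(1-α)) * (1/s) * ((s:ℝ) - η) := by nlinarith
  have hCC9 : (1:ℝ)/(1-α) ≤ (α * (1-α))⁻¹ := by
    rw [one_div, mul_inv]
    have h1 : (1:ℝ) ≤ α⁻¹ := by
      rw [le_inv_comm₀ (by norm_num) hα0]; linarith
    nlinarith [inv_pos.2 h1α]
  have hα2η : (0:ℝ) < α ^ (2*η) := by positivity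
  rcases lt_or_eq_of_le hηk with hlt | heq
  · -- η < k
    have hB1 : ((s - η).choose (k - η) : ℝ) ≤ α ^ η * (s.choose k : ℝ) :=
      lemB α hα0 hα1 η k s hηk hks.le hka
    have hB2 : ((s - η).choose (k - η - 1) : ℝ) ≤ α ^ η * (s.choose (k-1) : ℝ) := by
      have heq2 : (s - η).choose (k - η - 1) = (s - η).choose ((k-1) - η) := by
        congr 1; omega
      rw [heq2]
      apply lemB α hα0 hα1 η (k-1) s (by omega) (by omega)
      have : ((k - 1 : ℕ) : ℝ) = (k:ℝ) - 1 := by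
        push_cast [Nat.cast_sub (by omega : 1 ≤ k)]; ring
      rw [this]; nlinarith
    have hnn1 : (0:ℝ) ≤ ((s - η).choose (k - η) : ℝ) := by positivity
    have hnn2 : (0:ℝ) ≤ ((s - η).choose (k - η - 1) : ℝ) := by positivity
    have hnn3 : (0:ℝ) ≤ (s.choose k : ℝ) := by positivity
    have hnn4 : (0:ℝ) ≤ (s.choose (k-1) : ℝ) := by positivity
    have hfracpos : (0:ℝ) < 1 / ((s - η:ℕ) : ℝ) := by rw [hsη]; positivity
    calc (1 / ((s - η : ℕ) : ℝ)) * ((s - η).choose (k - η) : ℝ) * ((s - η).choose (k - η - 1) : ℝ)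
        ≤ ((1/(1-α)) * (1/s)) * (α ^ η * (s.choose k : ℝ)) * (α ^ η * (s.choose (k-1) : ℝ)) := by
          apply mul_le_mul
          · apply mul_le_mul hfrac hB1 hnn1 (by positivity)
          · exact hB2
          · exact hnn2
          · positivity
      _ = ((1/(1-α)) * (α^η * α^η)) * ((1 / (s : ℝ)) * (s.choose k : ℝ) * (s.choose (k - 1) : ℝ)) := by
          ring
      _ ≤ ((α * (1 - α))⁻¹ * α ^ (2*η)) * ((1 / (s : ℝ)) * (s.choose k : ℝ) * (s.choose (k - 1) : ℝ)) := by
          apply mul_le_mul_of_nonneg_right _ (by positivity)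
          rw [← pow_add]
          have h2η : η + η = 2 * η := by ring
          rw [h2η]
          apply mul_le_mul_of_nonneg_right hCC9 (by positivity)
      _ = (α * (1 - α))⁻¹ * α ^ (2 * η) * ((1 / (s : ℝ)) * (s.choose k : ℝ) * (s.choose (k - 1) : ℝ)) := by
          ring
  · -- η = k
    subst heq
    have e1 : η - η = 0 := by omega
    have e2 : η - η - 1 = 0 := by omega
    rw [e1]  -- careful: goal has (k - η) with k = η
    simp only [Nat.sub_self, Nat.zero_sub, Nat.choose_zero_right]
    -- goal: 1/(s-η) * 1 * 1 ≤ C₉ α^2η (1/s) C(s,η) C(s,η-1)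
    have hF1 : (1:ℝ) ≤ α ^ η * (s.choose η : ℝ) := lemF α hα0 hα1 η s hηa
    have hF2 : (1:ℝ) ≤ α ^ (η-1) * (s.choose (η-1) : ℝ) := by
      apply lemF α hα0 hα1 (η-1) s
      have : ((η - 1 : ℕ) : ℝ) ≤ (η:ℝ) := by
        exact_mod_cast Nat.sub_le η 1
      linarith
    have hsplit : α ^ (2*η) = α * (α ^ η * α ^ (η - 1)) := by
      have h2 : 2*η = (η + (η-1)) + 1 := by omega
      rw [h2, pow_succ, pow_add]; ring
    have hprod : (1:ℝ) ≤ (α ^ η * (s.choose η : ℝ)) * (α ^ (η-1) * (s.choose (η-1) : ℝ)) := by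
      have := mul_le_mul hF1 hF2 zero_le_one (le_trans zero_le_one hF1)
      linarith
    have hkey : α ≤ α ^ (2*η) * ((s.choose η : ℝ) * (s.choose (η-1) : ℝ)) := by
      have heq3 : α ^ (2*η) * ((s.choose η : ℝ) * (s.choose (η-1) : ℝ))
          = α * ((α ^ η * (s.choose η : ℝ)) * (α ^ (η-1) * (s.choose (η-1) : ℝ))) := by
        rw [hsplit]; ring
      rw [heq3]
      calc α = α * 1 := by ring
        _ ≤ α * ((α ^ η * (s.choose η : ℝ)) * (α ^ (η-1) * (s.choose (η-1) : ℝ))) :=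
            mul_le_mul_of_nonneg_left hprod hα0.le
    -- RHS ≥ C₉ * α / s = 1/((1-α) s) ≥ 1/(s-η)
    have hRHS : (α * (1 - α))⁻¹ * α ^ (2 * η) * ((1 / (s : ℝ)) * (s.choose η : ℝ) * (s.choose (η - 1) : ℝ))
        ≥ (α * (1-α))⁻¹ * α * (1/s) := by
      have hpos : (0:ℝ) < (α * (1-α))⁻¹ * (1/s) := by positivity
      calc (α * (1 - α))⁻¹ * α ^ (2 * η) * ((1 / (s : ℝ)) * (s.choose η : ℝ) * (s.choose (η - 1) : ℝ))
          = ((α * (1-α))⁻¹ * (1/s)) * (α ^ (2*η) * ((s.choose η : ℝ) * (s.choose (η-1) : ℝ))) := by ring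
        _ ≥ ((α * (1-α))⁻¹ * (1/s)) * α := mul_le_mul_of_nonneg_left hkey hpos.le
        _ = (α * (1-α))⁻¹ * α * (1/s) := by ring
    have hlast : (1:ℝ) / ((s - η:ℕ):ℝ) ≤ (α * (1-α))⁻¹ * α * (1/s) := by
      have : (α * (1-α))⁻¹ * α = (1-α)⁻¹ := by
        field_simp
      rw [this]
      calc (1:ℝ) / ((s - η:ℕ):ℝ) ≤ (1/(1-α)) * (1/s) := hfrac
        _ = (1-α)⁻¹ * (1/s) := by rw [one_div]
    calc (1 / ((s - η:ℕ):ℝ)) * ((1:ℕ):ℝ) * ((1:ℕ):ℝ) = 1 / ((s - η:ℕ):ℝ) := by norm_num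
      _ ≤ (α * (1-α))⁻¹ * α * (1/s) := hlast
      _ ≤ (α * (1 - α))⁻¹ * α ^ (2 * η) * ((1 / (s : ℝ)) * (s.choose η : ℝ) * (s.choose (η - 1) : ℝ)) := hRHS

-- Section 3b: bijection dyckSet ≃ Pset
lemma Tmap_mem {s k : ℕ} {f : ℕ → Bool} (hf : f ∈ dyckSet s k) :
    (Uof s f, Dof s f) ∈ Pset s k k := by
  rw [dyck_iff] at hf
  obtain ⟨hvan, hU, hD, hcond⟩ := hf
  rw [mem_Pset]
  refine ⟨Uof_subset s f, Dof_subset s f, hU, hD, ?_⟩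
  intro t ht
  rw [show ((Uof s f, Dof s f).1) = Uof s f from rfl, show ((Uof s f, Dof s f).2) = Dof s f from rfl,
    Dof_inter_range s t f (by omega), Uof_inter_range s (t+1) f (by omega)]
  exact hcond t ht

lemma Tmap_injOn (s k : ℕ) :
    Set.InjOn (fun f => (Uof s f, Dof s f)) (dyckSet s k) := by
  intro f hf g hg heq
  rw [dyck_iff] at hf hg
  have hU : Uof s f = Uof s g := congrArg Prod.fst heq
  have hD : Dof s f = Dof s g := congrArg Prod.snd heq
  funext t
  rcases Nat.lt_or_ge t (2*s) with ht | ht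
  · rcases Nat.even_or_odd t with ⟨m, hm⟩ | ⟨m, hm⟩
    · have hms : m < s := by omega
      have h2 : t = 2*m := by omega
      subst h2
      have hmem : m ∈ Uof s f ↔ m ∈ Uof s g := by rw [hU]
      simp only [Uof, Finset.mem_filter, Finset.mem_range] at hmem
      cases hfv : f (2*m) <;> cases hgv : g (2*m) <;> simp [hfv, hgv, hms] at hmem ⊢
    · have hms : m < s := by omega
      have h2 : t = 2*m+1 := by omega
      subst h2
      have hmem : m ∈ Dof s f ↔ m ∈ Dof s g := by rw [hD]
      simp only [Dof, Finset.mem_filter, Finset.mem_range] at hmem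
      cases hfv : f (2*m+1) <;> cases hgv : g (2*m+1) <;> simp [hfv, hgv, hms] at hmem ⊢
  · rw [hf.1 t ht, hg.1 t ht]

lemma Tmap_surjOn (s k : ℕ) (p : Finset ℕ × Finset ℕ) (hp : p ∈ Pset s k k) :
    ∃ f ∈ dyckSet s k, (Uof s f, Dof s f) = p := by
  rw [mem_Pset] at hp
  obtain ⟨h1, h2, hc1, hc2, hcond⟩ := hp
  set g : ℕ → Bool := fun t =>
    if t < 2*s then (if t % 2 = 0 then decide (t/2 ∈ p.1) else !decide (t/2 ∈ p.2)) else false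
    with hg
  have hgU : Uof s g = p.1 := by
    ext m
    simp only [Uof, Finset.mem_filter, Finset.mem_range]
    constructor
    · rintro ⟨hm, hv⟩
      rw [hg] at hv
      simp only [show 2*m < 2*s from by omega, if_pos, Nat.mul_mod_right,
        Nat.mul_div_cancel_left m (by norm_num : 0 < 2)] at hv
      simpa using hv
    · intro hm
      have hms : m < s := by simpa using h1 hm
      refine ⟨hms, ?_⟩
      rw [hg]
      simp only [show 2*m < 2*s from by omega, if_pos, Nat.mul_mod_right,
        Nat.mul_div_cancel_left m (by norm_num : 0 < 2)]
      simpa using hm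
  have hgD : Dof s g = p.2 := by
    ext m
    simp only [Dof, Finset.mem_filter, Finset.mem_range]
    have hmod : (2*m+1) % 2 = 1 := by omega
    have hdiv : (2*m+1) / 2 = m := by omega
    constructor
    · rintro ⟨hm, hv⟩
      rw [hg] at hv
      simp only [show 2*m+1 < 2*s from by omega, if_pos, hmod, hdiv] at hv
      simpa using hv
    · intro hm
      have hms : m < s := by simpa using h2 hm
      refine ⟨hms, ?_⟩
      rw [hg]
      simp only [show 2*m+1 < 2*s from by omega, if_pos, hmod, hdiv]
      simpa using hm
  refine ⟨g, ?_, by rw [hgU, hgD]⟩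
  rw [dyck_iff]
  refine ⟨?_, by rw [hgU]; exact hc1, by rw [hgD]; exact hc2, ?_⟩
  · intro t ht
    rw [hg]
    simp [show ¬ (t < 2*s) from by omega]
  · intro t ht
    have hDt : Dof t g = p.2 ∩ Finset.range t := by
      rw [← hgD, Dof_inter_range s t g (by omega)]
    have hUt : Uof (t+1) g = p.1 ∩ Finset.range (t+1) := by
      rw [← hgU, Uof_inter_range s (t+1) g (by omega)]
    rw [hDt, hUt]
    exact hcond t ht

lemma dyck_image (s k : ℕ) :
    (fun f => (Uof s f, Dof s f)) '' (dyckSet s k) = ↑(Pset s k k) := by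
  apply Set.eq_of_subset_of_subset
  · rintro q ⟨f, hf, rfl⟩
    exact Tmap_mem hf
  · intro q hq
    obtain ⟨f, hf, hfq⟩ := Tmap_surjOn s k q hq
    exact ⟨f, hf, hfq⟩

lemma dyck_finite (s k : ℕ) : (dyckSet s k).Finite := by
  apply Set.Finite.of_finite_image _ (Tmap_injOn s k)
  rw [dyck_image]
  exact (Pset s k k).finite_toSet

lemma dyck_ncard (s k : ℕ) : (dyckSet s k).ncard = (Pset s k k).card := by
  rw [← Set.ncard_coe_finset, ← dyck_image s k, Set.ncard_image_of_injOn (Tmap_injOn s k)]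


def cmpSet (s η j : ℕ) (X : Finset ℕ) : Finset ℕ :=
  (Finset.range (s-η)).filter (fun x => if x < j then x ∈ X else x + η ∈ X)

lemma filter_range_inter (p : ℕ → Prop) [DecidablePred p] (n t : ℕ) (h : t ≤ n) :
    ((Finset.range n).filter p) ∩ Finset.range t = (Finset.range t).filter p := by
  ext x
  simp only [Finset.mem_inter, Finset.mem_filter, Finset.mem_range]
  constructor
  · rintro ⟨⟨_, hp⟩, hx⟩; exact ⟨hx, hp⟩
  · rintro ⟨hx, hp⟩; exact ⟨⟨by omega, hp⟩, hx⟩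

lemma inter_range_filter (X : Finset ℕ) (n : ℕ) :
    X ∩ Finset.range n = (Finset.range n).filter (· ∈ X) := by
  ext x
  simp only [Finset.mem_inter, Finset.mem_filter, Finset.mem_range]
  tauto

lemma cmp_count1 (s η j t : ℕ) (X : Finset ℕ) (htj : t ≤ j) (hts : t ≤ s - η) :
    (cmpSet s η j X ∩ Finset.range t).card = (X ∩ Finset.range t).card := by
  unfold cmpSet
  rw [filter_range_inter _ _ _ hts, inter_range_filter]
  congr 1
  apply Finset.filter_congr
  intro x hx
  simp only [Finset.mem_range] at hx
  rw [if_pos (by omega)]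

lemma cmp_count2 (s η j t : ℕ) (X : Finset ℕ) (hblock : ∀ i, i < η → j + i ∈ X)
    (hjt : j ≤ t) (hts : t ≤ s - η) (hjs : j + η ≤ s) :
    (cmpSet s η j X ∩ Finset.range t).card + η = (X ∩ Finset.range (t+η)).card := by
  unfold cmpSet
  rw [filter_range_inter _ _ _ hts, inter_range_filter]
  have hsplitL : Finset.range t = Finset.Ico 0 j ∪ Finset.Ico j t := by
    rw [Finset.range_eq_Ico, Finset.Ico_union_Ico_eq_Ico (by omega) hjt]
  have hsplitR : Finset.range (t+η) = (Finset.Ico 0 j ∪ Finset.Ico j (j+η)) ∪ Finset.Ico (j+η) (t+η) := by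
    rw [Finset.range_eq_Ico, Finset.Ico_union_Ico_eq_Ico (by omega) (by omega),
      Finset.Ico_union_Ico_eq_Ico (by omega) (by omega)]
  rw [hsplitL, hsplitR, Finset.filter_union, Finset.filter_union, Finset.filter_union]
  rw [Finset.card_union_of_disjoint, Finset.card_union_of_disjoint, Finset.card_union_of_disjoint]
  · -- main equality
    have e1 : (Finset.Ico 0 j).filter (fun x => if x < j then x ∈ X else x + η ∈ X)
        = (Finset.Ico 0 j).filter (· ∈ X) := by
      apply Finset.filter_congr
      intro x hx
      simp only [Finset.mem_Ico] at hx
      rw [if_pos (by omega)]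
    have e2 : ((Finset.Ico j t).filter (fun x => if x < j then x ∈ X else x + η ∈ X)).card
        = ((Finset.Ico (j+η) (t+η)).filter (· ∈ X)).card := by
      apply Finset.card_nbij' (fun x => x + η) (fun y => y - η)
      · intro x hx
        simp only [Finset.mem_coe, Finset.mem_filter, Finset.mem_Ico] at hx ⊢
        rw [if_neg (by omega)] at hx
        refine ⟨⟨by omega, by omega⟩, hx.2⟩
      · intro y hy
        simp only [Finset.mem_coe, Finset.mem_filter, Finset.mem_Ico] at hy ⊢
        rw [if_neg (by omega)]
        have : y - η + η = y := by omega
        rw [this]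
        exact ⟨⟨by omega, by omega⟩, hy.2⟩
      · intro x hx; show x + η - η = x; omega
      · intro y hy
        simp only [Finset.mem_coe, Finset.mem_filter, Finset.mem_Ico] at hy
        show y - η + η = y; omega
    have e3 : (Finset.Ico j (j+η)).filter (· ∈ X) = Finset.Ico j (j+η) := by
      apply Finset.filter_true_of_mem
      intro x hx
      simp only [Finset.mem_Ico] at hx
      have := hblock (x - j) (by omega)
      have hxe : j + (x - j) = x := by omega
      rwa [hxe] at this
    rw [e1, e2, e3, Nat.card_Ico]
    have : j + η - j = η := by omega
    rw [this]
    ring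
  · -- disjointness: LHS split
    apply Finset.disjoint_filter_filter
    rw [Finset.disjoint_left]
    intro x hx hy
    simp only [Finset.mem_Ico] at hx hy
    omega
  · -- RHS outer split
    rw [Finset.disjoint_union_left]
    constructor <;>
    · apply Finset.disjoint_filter_filter
      rw [Finset.disjoint_left]
      intro x hx hy
      simp only [Finset.mem_Ico] at hx hy
      omega
  · -- RHS inner split
    apply Finset.disjoint_filter_filter
    rw [Finset.disjoint_left]
    intro x hx hy
    simp only [Finset.mem_Ico] at hx hy
    omega

lemma cmp_card (s η j : ℕ) (X : Finset ℕ) (hX : X ⊆ Finset.range s)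
    (hblock : ∀ i, i < η → j + i ∈ X) (hjs : j + η ≤ s) :
    (cmpSet s η j X).card + η = X.card := by
  have h := cmp_count2 s η j (s - η) X hblock (by omega) (le_refl _) hjs
  have e1 : cmpSet s η j X ∩ Finset.range (s - η) = cmpSet s η j X := by
    apply Finset.inter_eq_left.mpr
    unfold cmpSet
    exact Finset.filter_subset _ _
  have e2 : X ∩ Finset.range (s - η + η) = X := by
    apply Finset.inter_eq_left.mpr
    have : s - η + η = s := by omega
    rw [this]
    exact hX
  rwa [e1, e2] at h

lemma cmp_decompress (s η j : ℕ) (X : Finset ℕ) (hX : X ⊆ Finset.range s)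
    (hblock : ∀ i, i < η → j + i ∈ X) (hjs : j + η ≤ s) :
    X = (Finset.range s).filter
      (fun m => if m < j then m ∈ cmpSet s η j X
        else (if m < j + η then True else m - η ∈ cmpSet s η j X)) := by
  ext m
  simp only [Finset.mem_filter, Finset.mem_range]
  constructor
  · intro hm
    have hms : m < s := by simpa using hX hm
    refine ⟨hms, ?_⟩
    by_cases h1 : m < j
    · rw [if_pos h1]
      unfold cmpSet
      simp only [Finset.mem_filter, Finset.mem_range]
      exact ⟨by omega, by rw [if_pos h1]; exact hm⟩
    · rw [if_neg h1]
      by_cases h2 : m < j + η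
      · rw [if_pos h2]; trivial
      · rw [if_neg h2]
        unfold cmpSet
        simp only [Finset.mem_filter, Finset.mem_range]
        refine ⟨by omega, ?_⟩
        rw [if_neg (by omega)]
        have : m - η + η = m := by omega
        rw [this]
        exact hm
  · rintro ⟨hms, hm⟩
    by_cases h1 : m < j
    · rw [if_pos h1] at hm
      unfold cmpSet at hm
      simp only [Finset.mem_filter, Finset.mem_range] at hm
      rw [if_pos h1] at hm
      exact hm.2
    · rw [if_neg h1] at hm
      by_cases h2 : m < j + η
      · rw [if_pos h2] at hm
        have := hblock (m - j) (by omega)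
        have he : j + (m - j) = m := by omega
        rwa [he] at this
      · rw [if_neg h2] at hm
        unfold cmpSet at hm
        simp only [Finset.mem_filter, Finset.mem_range] at hm
        rw [if_neg (by omega)] at hm
        obtain ⟨_, hm2⟩ := hm
        have : m - η + η = m := by omega
        rwa [this] at hm2

lemma Aj_mem (s k η j : ℕ) (f : ℕ → Bool) (hf : f ∈ dyckSet s k) (hjs : j + η ≤ s)
    (hblock : ∀ i < η, f (2*(j+i)) = true ∧ f (2*(j+i)+1) = false) :
    (cmpSet s η j (Uof s f), cmpSet s η j (Dof s f)) ∈ Pset (s-η) (k-η) (k-η) := by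
  have hd := (dyck_iff s k f).mp hf
  obtain ⟨hvan, hU, hD, hcond⟩ := hd
  have hblockU : ∀ i, i < η → j + i ∈ Uof s f := by
    intro i hi
    simp only [Uof, Finset.mem_filter, Finset.mem_range]
    exact ⟨by omega, (hblock i hi).1⟩
  have hblockD : ∀ i, i < η → j + i ∈ Dof s f := by
    intro i hi
    simp only [Dof, Finset.mem_filter, Finset.mem_range]
    exact ⟨by omega, (hblock i hi).2⟩
  have hηk : η ≤ k := by
    -- block is η distinct elements of Uof, so η ≤ |Uof| = k
    have : (Finset.Ico j (j+η)) ⊆ Uof s f := by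
      intro x hx
      simp only [Finset.mem_Ico] at hx
      have := hblockU (x - j) (by omega)
      have he : j + (x - j) = x := by omega
      rwa [he] at this
    have := Finset.card_le_card this
    rw [Nat.card_Ico] at this
    omega
  have hcU : (cmpSet s η j (Uof s f)).card = k - η := by
    have := cmp_card s η j (Uof s f) (Uof_subset s f) hblockU hjs
    omega
  have hcD : (cmpSet s η j (Dof s f)).card = k - η := by
    have := cmp_card s η j (Dof s f) (Dof_subset s f) hblockD hjs
    omega
  rw [mem_Pset]
  refine ⟨Finset.filter_subset _ _, Finset.filter_subset _ _, hcU, hcD, ?_⟩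
  intro t ht
  simp only
  rcases Nat.lt_or_ge t j with hlt | hge
  · -- t < j, so t+1 ≤ j
    rw [cmp_count1 s η j t (Dof s f) (by omega) (by omega),
      cmp_count1 s η j (t+1) (Uof s f) (by omega) (by omega),
      Dof_inter_range s t f (by omega), Uof_inter_range s (t+1) f (by omega)]
    exact hcond t (by omega)
  · have h2D := cmp_count2 s η j t (Dof s f) hblockD hge (by omega) hjs
    have h2U := cmp_count2 s η j (t+1) (Uof s f) hblockU (by omega) (by omega) hjs
    rw [Dof_inter_range s (t+η) f (by omega)] at h2D
    rw [Uof_inter_range s (t+1+η) f (by omega)] at h2U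
    have horig := hcond (t+η) (by omega)
    have he : t + η + 1 = t + 1 + η := by ring
    rw [he] at horig
    omega

open scoped Classical in
noncomputable def PhiMap (s η : ℕ) (f : ℕ → Bool) : ℕ × (Finset ℕ × Finset ℕ) :=
  if h : hasConsecUD s η f then
    (Classical.choose h,
      (cmpSet s η (Classical.choose h) (Uof s f), cmpSet s η (Classical.choose h) (Dof s f)))
  else (0, (∅, ∅))

lemma Phi_injOn (s k η : ℕ) :
    Set.InjOn (PhiMap s η) {f ∈ dyckSet s k | hasConsecUD s η f} := by
  rintro f ⟨hfd, hfc⟩ g ⟨hgd, hgc⟩ heq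
  unfold PhiMap at heq
  rw [dif_pos hfc, dif_pos hgc] at heq
  have hj : Classical.choose hfc = Classical.choose hgc := congrArg Prod.fst heq
  set j := Classical.choose hfc with hjdef
  have hspecf := Classical.choose_spec hfc
  have hspecg := Classical.choose_spec hgc
  rw [← hj] at hspecg
  obtain ⟨hjsf, hblockf⟩ := hspecf
  obtain ⟨hjsg, hblockg⟩ := hspecg
  have hU : cmpSet s η j (Uof s f) = cmpSet s η j (Uof s g) := by
    have := congrArg Prod.snd heq
    rw [← hj] at this
    exact congrArg Prod.fst this
  have hD : cmpSet s η j (Dof s f) = cmpSet s η j (Dof s g) := by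
    have := congrArg Prod.snd heq
    rw [← hj] at this
    exact congrArg Prod.snd this
  have hblockUf : ∀ i, i < η → j + i ∈ Uof s f := fun i hi => by
    simp only [Uof, Finset.mem_filter, Finset.mem_range]
    exact ⟨by omega, (hblockf i hi).1⟩
  have hblockUg : ∀ i, i < η → j + i ∈ Uof s g := fun i hi => by
    simp only [Uof, Finset.mem_filter, Finset.mem_range]
    exact ⟨by omega, (hblockg i hi).1⟩
  have hblockDf : ∀ i, i < η → j + i ∈ Dof s f := fun i hi => by
    simp only [Dof, Finset.mem_filter, Finset.mem_range]
    exact ⟨by omega, (hblockf i hi).2⟩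
  have hblockDg : ∀ i, i < η → j + i ∈ Dof s g := fun i hi => by
    simp only [Dof, Finset.mem_filter, Finset.mem_range]
    exact ⟨by omega, (hblockg i hi).2⟩
  have hUeq : Uof s f = Uof s g := by
    rw [cmp_decompress s η j (Uof s f) (Uof_subset s f) hblockUf hjsf,
      cmp_decompress s η j (Uof s g) (Uof_subset s g) hblockUg hjsg, hU]
  have hDeq : Dof s f = Dof s g := by
    rw [cmp_decompress s η j (Dof s f) (Dof_subset s f) hblockDf hjsf,
      cmp_decompress s η j (Dof s g) (Dof_subset s g) hblockDg hjsg, hD]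
  exact Tmap_injOn s k hfd hgd (by rw [Prod.mk.injEq]; exact ⟨hUeq, hDeq⟩)

lemma consec_count (s k η : ℕ) :
    {f ∈ dyckSet s k | hasConsecUD s η f}.ncard
      ≤ (s+1) * (Pset (s-η) (k-η) (k-η)).card := by
  set Sc := {f ∈ dyckSet s k | hasConsecUD s η f} with hSc
  have hfin : Sc.Finite := (dyck_finite s k).subset (fun f hf => hf.1)
  have himg : (PhiMap s η) '' Sc ⊆ ↑((Finset.range (s+1)) ×ˢ Pset (s-η) (k-η) (k-η)) := by
    rintro q ⟨f, ⟨hfd, hfc⟩, rfl⟩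
    unfold PhiMap
    rw [dif_pos hfc]
    simp only [Finset.coe_product, Set.mem_prod, Finset.mem_coe, Finset.mem_range]
    have hspec := Classical.choose_spec hfc
    exact ⟨by omega, Aj_mem s k η (Classical.choose hfc) f hfd hspec.1 hspec.2⟩
  calc Sc.ncard = ((PhiMap s η) '' Sc).ncard :=
        (Set.ncard_image_of_injOn (Phi_injOn s k η)).symm
    _ ≤ ((Finset.range (s+1)) ×ˢ Pset (s-η) (k-η) (k-η) : Finset _).card := by
        rw [← Set.ncard_coe_finset]
        exact Set.ncard_le_ncard himg (Finset.finite_toSet _)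
    _ = (s+1) * (Pset (s-η) (k-η) (k-η)).card := by
        rw [Finset.card_product, Finset.card_range]


/-- Under the uniform measure on Dyck paths of length `2 s_N` with `k ≤ α s_N`
odd up-steps, the probability of containing `η_N` consecutive `UD` 2-steps is at
most `C₇ s_N² α^{2η_N} C₉`; more precisely, the corresponding ratio of Narayana
numbers satisfies `N(s_N-η_N, k-η_N)/N(s_N,k) ≤ C₉ α^{2η_N}`. -/
theorem consecutive_UD_steps_rare (α : ℝ) (hα0 : 0 < α) (hα1 : α < 1) :
    ∃ C₇ > 0, ∃ C₉ > 0, ∀ s k η : ℕ, 1 ≤ η → η ≤ k → (k : ℝ) ≤ α * s →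
      (({f ∈ dyckSet s k | hasConsecUD s η f}.ncard : ℝ)
          ≤ C₇ * (s : ℝ) ^ 2 * α ^ (2 * η) * C₉ * ((dyckSet s k).ncard : ℝ)) ∧
      ((1 / ((s - η : ℕ) : ℝ)) * ((s - η).choose (k - η) : ℝ) *
            ((s - η).choose (k - η - 1) : ℝ)
          ≤ C₉ * α ^ (2 * η) *
            ((1 / (s : ℝ)) * (s.choose k : ℝ) * (s.choose (k - 1) : ℝ))) := by
  have h1α : (0:ℝ) < 1 - α := by linarith
  refine ⟨2, by norm_num, (α * (1 - α))⁻¹, by positivity, ?_⟩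
  intro s k η hη1 hηk hka
  have hratio := narayana_ratio α hα0 hα1 s k η hη1 hηk hka
  refine ⟨?_, hratio⟩
  -- basic facts
  have hk1 : (1:ℝ) ≤ (k:ℝ) := by exact_mod_cast hη1.trans hηk
  have hs0 : 0 < s := by
    rcases Nat.eq_zero_or_pos s with rfl | h
    · exfalso; push_cast at hka; nlinarith
    · exact h
  have hs_real : (0:ℝ) < (s:ℝ) := by exact_mod_cast hs0
  have hks : k < s := by
    by_contra h
    push_neg at h
    have : (s : ℝ) ≤ (k : ℝ) := by exact_mod_cast h
    nlinarith
  have hηs : η < s := lt_of_le_of_lt hηk hks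
  have hsηpos : 0 < s - η := by omega
  -- counting
  have hcount := consec_count s k η
  have hNd : (dyckSet s k).ncard = (Pset s k k).card := dyck_ncard s k
  have hdiag : s * (Pset s k k).card = s.choose k * s.choose (k-1) :=
    Pset_diag s k (by omega) (by omega)
  have hNreal : ((Pset s k k).card : ℝ)
      = (1 / (s : ℝ)) * (s.choose k : ℝ) * (s.choose (k - 1) : ℝ) := by
    have : ((s * (Pset s k k).card : ℕ) : ℝ) = ((s.choose k * s.choose (k-1) : ℕ) : ℝ) := by
      exact_mod_cast congrArg (fun n : ℕ => (n : ℝ)) hdiag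
    push_cast at this
    field_simp
    linarith
  have hNnn : (0:ℝ) ≤ (1 / (s : ℝ)) * (s.choose k : ℝ) * (s.choose (k - 1) : ℝ) := by positivity
  have hC9pos : (0:ℝ) < (α * (1 - α))⁻¹ := by
    have : (0:ℝ) < 1 - α := by linarith
    positivity
  rcases Nat.lt_or_ge η k with hlt | hge
  · -- η < k
    have hdiag' : (s-η) * (Pset (s-η) (k-η) (k-η)).card
        = (s-η).choose (k-η) * (s-η).choose (k-η-1) := by
      have := Pset_diag (s-η) (k-η) (by omega) (by omega)
      rwa [show k - η - 1 = k - η - 1 from rfl] at this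
    have hsηreal : (0:ℝ) < ((s - η : ℕ) : ℝ) := by exact_mod_cast hsηpos
    have hPreal : ((Pset (s-η) (k-η) (k-η)).card : ℝ)
        = (1 / ((s - η : ℕ) : ℝ)) * ((s-η).choose (k-η) : ℝ) * ((s-η).choose (k-η-1) : ℝ) := by
      have : (((s-η) * (Pset (s-η) (k-η) (k-η)).card : ℕ) : ℝ)
          = (((s-η).choose (k-η) * (s-η).choose (k-η-1) : ℕ) : ℝ) := by
        exact_mod_cast congrArg (fun n : ℕ => (n : ℝ)) hdiag'
      push_cast at this
      field_simp
      linarith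
    have hP_le : ((Pset (s-η) (k-η) (k-η)).card : ℝ)
        ≤ (α * (1 - α))⁻¹ * α ^ (2 * η) * (((Pset s k k).card : ℝ)) := by
      rw [hPreal, hNreal]
      exact hratio
    have hcast : ({f ∈ dyckSet s k | hasConsecUD s η f}.ncard : ℝ)
        ≤ ((s:ℝ)+1) * ((Pset (s-η) (k-η) (k-η)).card : ℝ) := by
      have := hcount
      have hc : (({f ∈ dyckSet s k | hasConsecUD s η f}.ncard : ℕ) : ℝ)
          ≤ (((s+1) * (Pset (s-η) (k-η) (k-η)).card : ℕ) : ℝ) := by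
        exact_mod_cast this
      push_cast at hc
      linarith
    have hs1 : ((s:ℝ)+1) ≤ 2 * (s:ℝ)^2 := by nlinarith
    have hPnn : (0:ℝ) ≤ ((Pset (s-η) (k-η) (k-η)).card : ℝ) := by positivity
    calc ({f ∈ dyckSet s k | hasConsecUD s η f}.ncard : ℝ)
        ≤ ((s:ℝ)+1) * ((Pset (s-η) (k-η) (k-η)).card : ℝ) := hcast
      _ ≤ ((s:ℝ)+1) * ((α * (1 - α))⁻¹ * α ^ (2 * η) * ((Pset s k k).card : ℝ)) :=
          mul_le_mul_of_nonneg_left hP_le (by positivity)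
      _ ≤ (2 * (s:ℝ)^2) * ((α * (1 - α))⁻¹ * α ^ (2 * η) * ((Pset s k k).card : ℝ)) := by
          apply mul_le_mul_of_nonneg_right hs1
          positivity
      _ = 2 * (s:ℝ)^2 * α ^ (2 * η) * (α * (1 - α))⁻¹ * ((dyckSet s k).ncard : ℝ) := by
          rw [hNd]; ring
  · -- η = k : the compressed set is empty
    have hek : k - η = 0 := by omega
    have hzero : (Pset (s-η) (k-η) (k-η)).card = 0 := by
      rw [hek]
      exact Pset_a_zero (s-η) 0 (by omega)
    have : {f ∈ dyckSet s k | hasConsecUD s η f}.ncard = 0 := by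
      have := hcount
      rw [hzero] at this
      omega
    rw [this, Nat.cast_zero]
    have hnn : (0:ℝ) ≤ 2 * (s:ℝ)^2 * α ^ (2*η) * (α * (1 - α))⁻¹ * ((dyckSet s k).ncard : ℝ) := by
      positivity
    exact hnn
end

section
/- In the moment expansion of sample covariance matrices, a path of type (ñ, p̃) with k odd marked instants and origin chosen freely admits at most N · (N!/∏ᵢ nᵢ!) · (p!/∏ᵢ pᵢ!) · (k!/∏_{i≥2}(i!)^{pᵢ}) · ((s_N-k)!/∏_{i≥2}(i!)^{nᵢ}) assignments of vertices to marked instants, where nᵢ (resp. pᵢ) is the number of bottom-line (resp. top-line) vertices marked exactly i times, subject to N = Σᵢ nᵢ, p = Σᵢ pᵢ, Σ_{i≥1} i·nᵢ = s_N - k, and Σ_{i≥1} i·pᵢ = k. -/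
open Finset Equiv

namespace VACB

variable {α : Type*} [Fintype α] [DecidableEq α]

/-- multiplicity of `v` as a value of `f`. -/
abbrev fc {β : Type*} [Fintype β] (f : β → α) (v : α) : ℕ :=
  (Finset.univ.filter fun t => f t = v).card

section mk

variable {γ ι : Type*} [Fintype γ] [DecidableEq γ] (h₁ h₂ : γ → ι)
  (e : ∀ i, {x // h₁ x = i} ≃ {y // h₂ y = i})

lemma pieced_injective :
    Function.Injective (fun x : γ => ((e (h₁ x) ⟨x, rfl⟩ : {y // h₂ y = h₁ x}) : γ)) := by
  intro x x' hxx
  simp only at hxx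
  have hx2 : ∀ z : γ, h₂ ((e (h₁ z) ⟨z, rfl⟩ : {y // h₂ y = h₁ z}) : γ) = h₁ z :=
    fun z => (e (h₁ z) ⟨z, rfl⟩).2
  have hi : h₁ x = h₁ x' := by rw [← hx2 x, ← hx2 x', hxx]
  have key : ∀ (j) (hj : h₁ x' = j), ((e j ⟨x', hj⟩ : {y // h₂ y = j}) : γ)
      = ((e (h₁ x') ⟨x', rfl⟩ : {y // h₂ y = h₁ x'}) : γ) := by rintro j rfl; rfl
  have h2 : ((e (h₁ x) ⟨x', hi.symm⟩ : {y // h₂ y = h₁ x}) : γ)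
      = ((e (h₁ x) ⟨x, rfl⟩ : {y // h₂ y = h₁ x}) : γ) := by
    rw [key (h₁ x) hi.symm, ← hxx]
  have h3 := (e (h₁ x)).injective (Subtype.ext h2)
  exact (congrArg Subtype.val h3).symm

noncomputable def mkPerm : Perm γ :=
  Equiv.ofBijective _ (Finite.injective_iff_bijective.mp (pieced_injective h₁ h₂ e))

lemma mkPerm_apply (x : γ) :
    mkPerm h₁ h₂ e x = ((e (h₁ x) ⟨x, rfl⟩ : {y // h₂ y = h₁ x}) : γ) := rfl

lemma h₂_mkPerm (x : γ) : h₂ (mkPerm h₁ h₂ e x) = h₁ x := (e (h₁ x) ⟨x, rfl⟩).2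

end mk

lemma mkPerm_family_injective {γ ι : Type*} [Fintype γ] [DecidableEq γ] (h : γ → ι) :
    Function.Injective (fun d : ∀ i, Perm {x // h x = i} => mkPerm h h d) := by
  intro d d' hdd
  funext i
  refine Equiv.ext fun y => ?_
  obtain ⟨x, hx⟩ := y
  subst hx
  have hdd' : mkPerm h h d = mkPerm h h d' := hdd
  have : mkPerm h h d x = mkPerm h h d' x := by rw [hdd']
  exact Subtype.ext this

lemma exists_tau {β : Type*} [Fintype β] [DecidableEq β] (f g : β → α) (σ : Perm α)
    (h : ∀ v, fc f (σ v) = fc g v) : ∃ τ : Perm β, ∀ t, f (τ t) = σ (g t) := by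
  have hcard : ∀ v, Fintype.card {t // g t = v} = Fintype.card {t // σ.symm (f t) = v} := by
    intro v
    rw [Fintype.card_subtype, Fintype.card_subtype]
    have hfil : (Finset.univ.filter fun t => σ.symm (f t) = v)
        = Finset.univ.filter fun t => f t = σ v := by
      apply Finset.filter_congr
      intro t _
      simp [Equiv.symm_apply_eq]
    rw [hfil]
    exact (h v).symm
  refine ⟨mkPerm g (fun t => σ.symm (f t)) (fun v => Fintype.equivOfCardEq (hcard v)),
    fun t => ?_⟩
  have h5 : σ.symm (f (mkPerm g (fun t => σ.symm (f t))
      (fun v => Fintype.equivOfCardEq (hcard v)) t)) = g t :=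
    h₂_mkPerm g (fun t => σ.symm (f t)) (fun v => Fintype.equivOfCardEq (hcard v)) t
  calc f (mkPerm g (fun t => σ.symm (f t)) (fun v => Fintype.equivOfCardEq (hcard v)) t)
      = σ (σ.symm (f (mkPerm g (fun t => σ.symm (f t))
          (fun v => Fintype.equivOfCardEq (hcard v)) t))) := (σ.apply_symm_apply _).symm
    _ = σ (g t) := by rw [h5]

section key

variable {M m n : ℕ}

def gF (hm : m ≤ M) (f : Fin m → Fin n) (v : Fin n) : Fin (M + 1) :=
  ⟨fc f v, Nat.lt_succ_of_le ((Finset.card_filter_le _ _).trans (by simpa using hm))⟩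

lemma gF_filter_card {pv : ℕ → ℕ} (hm : m ≤ M) (f : Fin m → Fin n)
    (hf : ∀ i : ℕ, (Finset.univ.filter fun v : Fin n => fc f v = i).card = pv i)
    (i : Fin (M + 1)) :
    (Finset.univ.filter fun v : Fin n => gF hm f v = i).card = pv i := by
  have hfil : (Finset.univ.filter fun v : Fin n => gF hm f v = i)
      = Finset.univ.filter fun v : Fin n => fc f v = (i : ℕ) := by
    apply Finset.filter_congr
    intro v _
    simp [gF, Fin.ext_iff]
  rw [hfil]
  exact hf (i : ℕ)

lemma gF_subtype_card {pv : ℕ → ℕ} (hm : m ≤ M) (f : Fin m → Fin n)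
    (hf : ∀ i : ℕ, (Finset.univ.filter fun v : Fin n => fc f v = i).card = pv i)
    (i : Fin (M + 1)) :
    Fintype.card {v : Fin n // gF hm f v = i} = pv i := by
  rw [Fintype.card_subtype]
  exact gF_filter_card hm f hf i

lemma exists_sigma {β : Type*} [Fintype β] [DecidableEq β] (hm : Fintype.card β ≤ M)
    (f g : β → α) :
    True := trivial

lemma key (M m n : ℕ) (hm : m ≤ M) (pv : ℕ → ℕ) :
    Nat.card {f : Fin m → Fin n // ∀ i : ℕ,
        (Finset.univ.filter (fun v : Fin n =>
          (Finset.univ.filter (fun t : Fin m => f t = v)).card = i)).card = pv i}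
      * (∏ i ∈ range (M + 1), (pv i).factorial)
      * (∏ i ∈ range (M + 1), (i.factorial) ^ (pv i))
      ≤ n.factorial * m.factorial := by
  classical
  rcases isEmpty_or_nonempty {f : Fin m → Fin n // ∀ i : ℕ,
      (Finset.univ.filter (fun v : Fin n =>
        (Finset.univ.filter (fun t : Fin m => f t = v)).card = i)).card = pv i} with hE | hNE
  · simp [Nat.card_of_isEmpty]
  obtain ⟨⟨f₀, hf₀⟩⟩ := hNE
  -- choice of σ and τ for each f in the class
  have hσ : ∀ a : {f : Fin m → Fin n // ∀ i : ℕ,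
      (Finset.univ.filter (fun v : Fin n =>
        (Finset.univ.filter (fun t : Fin m => f t = v)).card = i)).card = pv i},
      ∃ σ : Perm (Fin n), ∀ v, fc a.1 (σ v) = fc f₀ v := by
    intro a
    have hcard : ∀ i : Fin (M + 1),
        Fintype.card {v : Fin n // gF hm f₀ v = i}
          = Fintype.card {v : Fin n // gF hm a.1 v = i} := by
      intro i
      rw [gF_subtype_card hm f₀ hf₀ i, gF_subtype_card hm a.1 a.2 i]
    refine ⟨mkPerm (gF hm f₀) (gF hm a.1) (fun i => Fintype.equivOfCardEq (hcard i)),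
      fun v => ?_⟩
    exact congrArg Fin.val
      (h₂_mkPerm (gF hm f₀) (gF hm a.1) (fun i => Fintype.equivOfCardEq (hcard i)) v)
  choose σA hσA using hσ
  have hτ : ∀ a : {f : Fin m → Fin n // ∀ i : ℕ,
      (Finset.univ.filter (fun v : Fin n =>
        (Finset.univ.filter (fun t : Fin m => f t = v)).card = i)).card = pv i},
      ∃ τ : Perm (Fin m), ∀ t, a.1 (τ t) = σA a (f₀ t) :=
    fun a => exists_tau a.1 f₀ (σA a) (hσA a)
  choose τA hτA using hτ
  have hτρ : ∀ ρ : ∀ i : Fin (M + 1), Perm {v : Fin n // gF hm f₀ v = i},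
      ∃ τ : Perm (Fin m), ∀ t, f₀ (τ t) = mkPerm (gF hm f₀) (gF hm f₀) ρ (f₀ t) := by
    intro ρ
    refine exists_tau f₀ f₀ (mkPerm (gF hm f₀) (gF hm f₀) ρ) (fun v => ?_)
    exact congrArg Fin.val (h₂_mkPerm (gF hm f₀) (gF hm f₀) ρ v)
  choose τR hτR using hτρ
  -- the master identity
  have hmaster : ∀ (a : {f : Fin m → Fin n // ∀ i : ℕ,
      (Finset.univ.filter (fun v : Fin n =>
        (Finset.univ.filter (fun t : Fin m => f t = v)).card = i)).card = pv i})
      (ρ : ∀ i : Fin (M + 1), Perm {v : Fin n // gF hm f₀ v = i})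
      (π : ∀ v : Fin n, Perm {t : Fin m // f₀ t = v}) (t : Fin m),
      a.1 ((τA a * τR ρ * mkPerm f₀ f₀ π) t)
        = (σA a * mkPerm (gF hm f₀) (gF hm f₀) ρ) (f₀ t) := by
    intro a ρ π t
    simp only [Equiv.Perm.mul_apply]
    rw [hτA a, hτR ρ, h₂_mkPerm f₀ f₀ π t]
  -- injectivity
  have hΦ : Function.Injective
      (fun x : {f : Fin m → Fin n // ∀ i : ℕ,
          (Finset.univ.filter (fun v : Fin n =>
            (Finset.univ.filter (fun t : Fin m => f t = v)).card = i)).card = pv i}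
          × (∀ i : Fin (M + 1), Perm {v : Fin n // gF hm f₀ v = i})
          × (∀ v : Fin n, Perm {t : Fin m // f₀ t = v}) =>
        ((σA x.1 * mkPerm (gF hm f₀) (gF hm f₀) x.2.1,
          τA x.1 * τR x.2.1 * mkPerm f₀ f₀ x.2.2) :
          Perm (Fin n) × Perm (Fin m))) := by
    rintro ⟨a, ρ, π⟩ ⟨a', ρ', π'⟩ hx
    simp only [Prod.mk.injEq] at hx
    obtain ⟨h1, h2⟩ := hx
    have haa : a = a' := by
      apply Subtype.ext
      funext x
      have e1 := hmaster a ρ π ((τA a * τR ρ * mkPerm f₀ f₀ π)⁻¹ x)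
      have e2 := hmaster a' ρ' π' ((τA a' * τR ρ' * mkPerm f₀ f₀ π')⁻¹ x)
      rw [Equiv.Perm.inv_def, Equiv.apply_symm_apply] at e1 e2
      rw [e1, e2, h1, h2]
    subst haa
    have hρ : ρ = ρ' := mkPerm_family_injective (gF hm f₀) (mul_left_cancel h1)
    subst hρ
    have hπ : π = π' := mkPerm_family_injective f₀ (mul_left_cancel h2)
    rw [hπ]
  -- cardinalities
  have cardD2 : Nat.card (∀ i : Fin (M + 1), Perm {v : Fin n // gF hm f₀ v = i})
      = ∏ i ∈ range (M + 1), (pv i).factorial := by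
    rw [Nat.card_pi, ← Fin.prod_univ_eq_prod_range (fun i => (pv i).factorial) (M + 1)]
    apply Finset.prod_congr rfl
    intro i _
    rw [Nat.card_eq_fintype_card, Fintype.card_perm, gF_subtype_card hm f₀ hf₀ i]
  have cardD1 : Nat.card (∀ v : Fin n, Perm {t : Fin m // f₀ t = v})
      = ∏ i ∈ range (M + 1), (i.factorial) ^ (pv i) := by
    rw [Nat.card_pi]
    have step1 : ∀ v : Fin n, Nat.card (Perm {t : Fin m // f₀ t = v})
        = (fc f₀ v).factorial := by
      intro v
      rw [Nat.card_eq_fintype_card, Fintype.card_perm, Fintype.card_subtype]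
    calc ∏ v : Fin n, Nat.card (Perm {t : Fin m // f₀ t = v})
        = ∏ v : Fin n, (fc f₀ v).factorial := Finset.prod_congr rfl (fun v _ => step1 v)
      _ = ∏ i : Fin (M + 1), ∏ v ∈ Finset.univ.filter (fun v => gF hm f₀ v = i),
            (fc f₀ v).factorial :=
          (Finset.prod_fiberwise Finset.univ (gF hm f₀) (fun v => (fc f₀ v).factorial)).symm
      _ = ∏ i : Fin (M + 1), ((i : ℕ).factorial) ^ (pv (i : ℕ)) := by
          apply Finset.prod_congr rfl
          intro i _
          have hcg : ∀ v ∈ Finset.univ.filter (fun v => gF hm f₀ v = i),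
              (fc f₀ v).factorial = ((i : ℕ)).factorial := by
            intro v hv
            rw [Finset.mem_filter] at hv
            rw [← hv.2]
            rfl
          rw [Finset.prod_congr rfl hcg, Finset.prod_const,
            gF_filter_card hm f₀ hf₀ i]
      _ = ∏ i ∈ range (M + 1), (i.factorial) ^ (pv i) :=
          Fin.prod_univ_eq_prod_range (fun j => j.factorial ^ pv j) (M + 1)
  calc Nat.card {f : Fin m → Fin n // ∀ i : ℕ,
        (Finset.univ.filter (fun v : Fin n =>
          (Finset.univ.filter (fun t : Fin m => f t = v)).card = i)).card = pv i}
      * (∏ i ∈ range (M + 1), (pv i).factorial)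
      * (∏ i ∈ range (M + 1), (i.factorial) ^ (pv i))
      = Nat.card ({f : Fin m → Fin n // ∀ i : ℕ,
          (Finset.univ.filter (fun v : Fin n =>
            (Finset.univ.filter (fun t : Fin m => f t = v)).card = i)).card = pv i}
          × (∀ i : Fin (M + 1), Perm {v : Fin n // gF hm f₀ v = i})
          × (∀ v : Fin n, Perm {t : Fin m // f₀ t = v})) := by
        rw [Nat.card_prod, Nat.card_prod, cardD2, cardD1, mul_assoc]
    _ ≤ Nat.card (Perm (Fin n) × Perm (Fin m)) := Nat.card_le_card_of_injective _ hΦ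
    _ = n.factorial * m.factorial := by
        rw [Nat.card_prod, Nat.card_eq_fintype_card, Nat.card_eq_fintype_card,
          Fintype.card_perm, Fintype.card_perm, Fintype.card_fin, Fintype.card_fin]

end key

end VACB

open Finset

/-- The number of ways to assign vertices to the marked instants of a path of
type `(ñ, p̃)` (with `k` odd marked instants, `s_N - k` even marked instants)
and to choose the origin is at most
`N · N!/∏nᵢ! · p!/∏pᵢ! · k!/∏_{i≥2}(i!)^{pᵢ} · (s_N-k)!/∏_{i≥2}(i!)^{nᵢ}`.
Here an assignment is a pair of maps from odd (resp. even) marked instants to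
top (resp. bottom) vertices whose multiplicity-class sizes are given by
`p̃ = (pᵢ)` (resp. `ñ = (nᵢ)`). -/
theorem vertex_assignment_count_bound (N p sN k : ℕ) (nv pv : ℕ → ℕ)
    (hk : k ≤ sN)
    (hN : N = ∑ i ∈ Finset.range (sN + 1), nv i)
    (hp : p = ∑ i ∈ Finset.range (sN + 1), pv i)
    (hn : ∑ i ∈ Finset.range (sN + 1), i * nv i = sN - k)
    (hpk : ∑ i ∈ Finset.range (sN + 1), i * pv i = k) :
    (N : ℚ) * (Nat.card {ab : (Fin k → Fin p) × (Fin (sN - k) → Fin N) //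
        (∀ i : ℕ, (Finset.univ.filter (fun v : Fin p =>
            (Finset.univ.filter (fun t : Fin k => ab.1 t = v)).card = i)).card = pv i) ∧
        (∀ i : ℕ, (Finset.univ.filter (fun v : Fin N =>
            (Finset.univ.filter (fun t : Fin (sN - k) => ab.2 t = v)).card = i)).card
              = nv i)} : ℚ)
      ≤ (N : ℚ) *
          ((N.factorial : ℚ) / ∏ i ∈ Finset.range (sN + 1), ((nv i).factorial : ℚ)) *
          ((p.factorial : ℚ) / ∏ i ∈ Finset.range (sN + 1), ((pv i).factorial : ℚ)) *
          ((k.factorial : ℚ) / ∏ i ∈ Finset.Icc 2 sN, ((i.factorial : ℚ)) ^ (pv i)) *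
          (((sN - k).factorial : ℚ) /
            ∏ i ∈ Finset.Icc 2 sN, ((i.factorial : ℚ)) ^ (nv i)) := by
  classical
  have key1 := VACB.key sN k p hk pv
  have key2 := VACB.key sN (sN - k) N (Nat.sub_le sN k) nv
  -- split the cardinality
  have E : {ab : (Fin k → Fin p) × (Fin (sN - k) → Fin N) //
        (∀ i : ℕ, (Finset.univ.filter (fun v : Fin p =>
            (Finset.univ.filter (fun t : Fin k => ab.1 t = v)).card = i)).card = pv i) ∧
        (∀ i : ℕ, (Finset.univ.filter (fun v : Fin N =>
            (Finset.univ.filter (fun t : Fin (sN - k) => ab.2 t = v)).card = i)).card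
              = nv i)} ≃
      {a : Fin k → Fin p // ∀ i : ℕ, (Finset.univ.filter (fun v : Fin p =>
            (Finset.univ.filter (fun t : Fin k => a t = v)).card = i)).card = pv i}
        × {b : Fin (sN - k) → Fin N // ∀ i : ℕ, (Finset.univ.filter (fun v : Fin N =>
            (Finset.univ.filter (fun t : Fin (sN - k) => b t = v)).card = i)).card = nv i} :=
    { toFun := fun x => (⟨x.1.1, x.2.1⟩, ⟨x.1.2, x.2.2⟩)
      invFun := fun x => ⟨(x.1.1, x.2.1), x.1.2, x.2.2⟩
      left_inv := fun ⟨⟨_, _⟩, _, _⟩ => rfl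
      right_inv := fun ⟨⟨_, _⟩, ⟨_, _⟩⟩ => rfl }
  have hsplit : Nat.card {ab : (Fin k → Fin p) × (Fin (sN - k) → Fin N) //
        (∀ i : ℕ, (Finset.univ.filter (fun v : Fin p =>
            (Finset.univ.filter (fun t : Fin k => ab.1 t = v)).card = i)).card = pv i) ∧
        (∀ i : ℕ, (Finset.univ.filter (fun v : Fin N =>
            (Finset.univ.filter (fun t : Fin (sN - k) => ab.2 t = v)).card = i)).card
              = nv i)}
      = Nat.card {a : Fin k → Fin p // ∀ i : ℕ, (Finset.univ.filter (fun v : Fin p =>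
            (Finset.univ.filter (fun t : Fin k => a t = v)).card = i)).card = pv i}
        * Nat.card {b : Fin (sN - k) → Fin N // ∀ i : ℕ,
            (Finset.univ.filter (fun v : Fin N =>
            (Finset.univ.filter (fun t : Fin (sN - k) => b t = v)).card = i)).card = nv i} := by
    rw [Nat.card_congr E, Nat.card_prod]
  rw [hsplit, Nat.cast_mul]
  -- positivity facts
  have hP2 : (0 : ℚ) < ∏ i ∈ Finset.range (sN + 1), ((pv i).factorial : ℚ) :=
    Finset.prod_pos fun i _ => by exact_mod_cast (pv i).factorial_pos
  have hP3 : (0 : ℚ) < ∏ i ∈ Finset.range (sN + 1), ((i.factorial : ℚ)) ^ (pv i) :=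
    Finset.prod_pos fun i _ => pow_pos (by exact_mod_cast i.factorial_pos) _
  have hQ2 : (0 : ℚ) < ∏ i ∈ Finset.range (sN + 1), ((nv i).factorial : ℚ) :=
    Finset.prod_pos fun i _ => by exact_mod_cast (nv i).factorial_pos
  have hQ3 : (0 : ℚ) < ∏ i ∈ Finset.range (sN + 1), ((i.factorial : ℚ)) ^ (nv i) :=
    Finset.prod_pos fun i _ => pow_pos (by exact_mod_cast i.factorial_pos) _
  have bound1 : (Nat.card {a : Fin k → Fin p // ∀ i : ℕ,
        (Finset.univ.filter (fun v : Fin p =>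
          (Finset.univ.filter (fun t : Fin k => a t = v)).card = i)).card = pv i} : ℚ)
      ≤ (p.factorial : ℚ) * (k.factorial : ℚ) /
          ((∏ i ∈ Finset.range (sN + 1), ((pv i).factorial : ℚ))
            * (∏ i ∈ Finset.range (sN + 1), ((i.factorial : ℚ)) ^ (pv i))) := by
    rw [le_div_iff₀ (mul_pos hP2 hP3), ← mul_assoc]
    exact_mod_cast key1
  have bound2 : (Nat.card {b : Fin (sN - k) → Fin N // ∀ i : ℕ,
        (Finset.univ.filter (fun v : Fin N =>
          (Finset.univ.filter (fun t : Fin (sN - k) => b t = v)).card = i)).card = nv i} : ℚ)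
      ≤ (N.factorial : ℚ) * ((sN - k).factorial : ℚ) /
          ((∏ i ∈ Finset.range (sN + 1), ((nv i).factorial : ℚ))
            * (∏ i ∈ Finset.range (sN + 1), ((i.factorial : ℚ)) ^ (nv i))) := by
    rw [le_div_iff₀ (mul_pos hQ2 hQ3), ← mul_assoc]
    exact_mod_cast key2
  have hIcc : ∀ q : ℕ → ℕ, ∏ i ∈ Finset.Icc 2 sN, ((i.factorial : ℚ)) ^ (q i)
      = ∏ i ∈ Finset.range (sN + 1), ((i.factorial : ℚ)) ^ (q i) := by
    intro q
    have hsub : Finset.Icc 2 sN ⊆ Finset.range (sN + 1) := by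
      intro x hx
      rw [Finset.mem_Icc] at hx
      rw [Finset.mem_range]
      exact Nat.lt_succ_of_le hx.2
    refine Finset.prod_subset hsub ?_
    intro x hx hnx
    rw [Finset.mem_range] at hx
    rw [Finset.mem_Icc] at hnx
    have hx2 : x < 2 := by
      by_contra h
      exact hnx ⟨Nat.le_of_not_lt h, Nat.lt_succ_iff.mp hx⟩
    interval_cases x <;> simp [Nat.factorial]
  have hmul := mul_le_mul bound1 bound2 (Nat.cast_nonneg _)
    (by positivity)
  have final_le := mul_le_mul_of_nonneg_left hmul (Nat.cast_nonneg N : (0:ℚ) ≤ N)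
  refine le_trans final_le (le_of_eq ?_)
  rw [hIcc pv, hIcc nv]
  field_simp
end
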